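/- arXiv:2505.10776 — 5 statements merged into one kernel-verified Lean document; each statement's English description precedes it below -/
import Mathlib

section
/- Let (a_i)_{i≥1} and (v_i)_{i≥1} be sequences of nonnegative reals with A := Σ_{i=1}^∞ a_i < 1 and V := Σ_{i=1}^∞ v_i < ∞. Define G₁(1)=1, G₁(k)=1+Σ_{i=1}^{k-1} a_i G₁(k-i), and G₂(1)=0, G₂(k)=Σ_{i=1}^{k-1} a_i G₂(k-i) + (1/2) Σ_{i=1}^{k-1} v_i G₁(k-i)² for k ≥ 2. Then for every n ≥ 1, G₂(n) ≤ V/(2(1-A)³). -/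
open Filter

/-- Lemma 2 (technical lemma for MDP): the second-order sequence `G₂` is bounded by
`V/(2(1-A)³)`. -/
theorem inar_G2_bound (a v : ℕ → ℝ) (ha : ∀ i, 0 ≤ a i) (hv : ∀ i, 0 ≤ v i)
    (hsuma : Summable (fun i => a (i + 1)))
    (hA : (∑' i : ℕ, a (i + 1)) < 1)
    (hsumv : Summable (fun i => v (i + 1)))
    (G1 G2 : ℕ → ℝ) (hG11 : G1 1 = 1)
    (hG1 : ∀ k ≥ 2, G1 k = 1 + ∑ i ∈ Finset.Icc 1 (k - 1), a i * G1 (k - i))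
    (hG21 : G2 1 = 0)
    (hG2 : ∀ k ≥ 2, G2 k = (∑ i ∈ Finset.Icc 1 (k - 1), a i * G2 (k - i))
      + (1 / 2) * ∑ i ∈ Finset.Icc 1 (k - 1), v i * (G1 (k - i)) ^ 2)
    (hG1bd : ∀ n ≥ 1, G1 n ≤ 1 / (1 - ∑' i : ℕ, a (i + 1))) :
    ∀ n ≥ 1, G2 n ≤ (∑' i : ℕ, v (i + 1)) / (2 * (1 - ∑' i : ℕ, a (i + 1)) ^ 3) := by
  set A := ∑' i : ℕ, a (i + 1) with hAdef
  set V := ∑' i : ℕ, v (i + 1) with hVdef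
  have hApos : (0 : ℝ) < 1 - A := by linarith
  have hAnn : (0 : ℝ) ≤ A := tsum_nonneg fun i => ha _
  have hVnn : (0 : ℝ) ≤ V := tsum_nonneg fun i => hv _
  have hsumA : ∀ m : ℕ, ∑ i ∈ Finset.Icc 1 m, a i ≤ A := by
    intro m
    rw [← Finset.Ico_add_one_right_eq_Icc, Finset.sum_Ico_eq_sum_range]
    calc ∑ i ∈ Finset.range m, a (1 + i)
        = ∑ i ∈ Finset.range m, a (i + 1) := by
          apply Finset.sum_congr rfl; intro i _; rw [add_comm]
      _ ≤ A := Summable.sum_le_tsum _ (fun i _ => ha _) hsuma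
  have hsumV : ∀ m : ℕ, ∑ i ∈ Finset.Icc 1 m, v i ≤ V := by
    intro m
    rw [← Finset.Ico_add_one_right_eq_Icc, Finset.sum_Ico_eq_sum_range]
    calc ∑ i ∈ Finset.range m, v (1 + i)
        = ∑ i ∈ Finset.range m, v (i + 1) := by
          apply Finset.sum_congr rfl; intro i _; rw [add_comm]
      _ ≤ V := Summable.sum_le_tsum _ (fun i _ => hv _) hsumv
  have hG1nn : ∀ n, 1 ≤ n → (0 : ℝ) ≤ G1 n := by
    intro n
    induction n using Nat.strong_induction_on with
    | _ n ih =>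
      intro hn
      rcases eq_or_lt_of_le hn with h1 | h2
      · rw [← h1, hG11]; norm_num
      · rw [hG1 n h2]
        have hs : 0 ≤ ∑ i ∈ Finset.Icc 1 (n - 1), a i * G1 (n - i) := by
          apply Finset.sum_nonneg
          intro i hi
          rw [Finset.mem_Icc] at hi
          exact mul_nonneg (ha i) (ih (n - i) (by omega) (by omega))
        linarith
  have hB : (0 : ℝ) ≤ V / (2 * (1 - A) ^ 3) := by positivity
  intro n
  induction n using Nat.strong_induction_on with
  | _ n ih =>
    intro hn
    rcases eq_or_lt_of_le hn with h1 | h2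
    · rw [← h1, hG21]; exact hB
    · rw [hG2 n h2]
      have hS1 : ∑ i ∈ Finset.Icc 1 (n - 1), a i * G2 (n - i)
          ≤ (∑ i ∈ Finset.Icc 1 (n - 1), a i) * (V / (2 * (1 - A) ^ 3)) := by
        rw [Finset.sum_mul]
        apply Finset.sum_le_sum
        intro i hi; rw [Finset.mem_Icc] at hi
        exact mul_le_mul_of_nonneg_left (ih (n - i) (by omega) (by omega)) (ha i)
      have hS1' : (∑ i ∈ Finset.Icc 1 (n - 1), a i) * (V / (2 * (1 - A) ^ 3))
          ≤ A * (V / (2 * (1 - A) ^ 3)) :=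
        mul_le_mul_of_nonneg_right (hsumA _) hB
      have hS2 : ∑ i ∈ Finset.Icc 1 (n - 1), v i * (G1 (n - i)) ^ 2
          ≤ (∑ i ∈ Finset.Icc 1 (n - 1), v i) * (1 / (1 - A)) ^ 2 := by
        rw [Finset.sum_mul]
        apply Finset.sum_le_sum
        intro i hi; rw [Finset.mem_Icc] at hi
        exact mul_le_mul_of_nonneg_left
          (pow_le_pow_left₀ (hG1nn _ (by omega)) (hG1bd _ (by omega)) 2) (hv i)
      have hS2' : (∑ i ∈ Finset.Icc 1 (n - 1), v i) * (1 / (1 - A)) ^ 2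
          ≤ V * (1 / (1 - A)) ^ 2 :=
        mul_le_mul_of_nonneg_right (hsumV _) (by positivity)
      have key : A * (V / (2 * (1 - A) ^ 3)) + (1 / 2) * (V * (1 / (1 - A)) ^ 2)
          = V / (2 * (1 - A) ^ 3) := by
        field_simp
        ring
      linarith
end

section
/- Let (a_i)_{i≥1} be nonnegative reals with A := Σ_{i=1}^∞ a_i < 1. Define G₁(1)=1 and G₁(k)=1+Σ_{i=1}^{k-1} a_i G₁(k-i) for k ≥ 2. Then (1/n) Σ_{k=1}^n G₁(k) → 1/(1-A) as n → ∞. -/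
open Filter Finset Topology

/-- Cesàro convergence of the renewal sequence `G₁`: `(1/n) ∑_{k=1}^n G₁(k) → 1/(1-A)`. -/
theorem inar_G1_cesaro (a : ℕ → ℝ) (ha : ∀ i, 0 ≤ a i)
    (hsum : Summable (fun i => a (i + 1)))
    (hA : (∑' i : ℕ, a (i + 1)) < 1)
    (G1 : ℕ → ℝ) (hG11 : G1 1 = 1)
    (hG1 : ∀ k ≥ 2, G1 k = 1 + ∑ i ∈ Finset.Icc 1 (k - 1), a i * G1 (k - i)) :
    Tendsto (fun n : ℕ => (∑ k ∈ Finset.Icc 1 n, G1 k) / (n : ℝ)) atTop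
      (nhds (1 / (1 - ∑' i : ℕ, a (i + 1)))) := by
  set A := ∑' i : ℕ, a (i + 1) with hAdef
  have hA0 : 0 ≤ A := tsum_nonneg fun i => ha _
  have h1A : (0:ℝ) < 1 - A := by linarith
  set M : ℝ := (1 - A)⁻¹ with hMdef
  have hM0 : 0 ≤ M := by positivity
  have hM1 : 1 ≤ M := by rw [hMdef, one_le_inv_iff₀]; constructor <;> linarith
  have hMA : 1 + A * M = M := by rw [hMdef]; field_simp; ring
  have hgoalM : (1:ℝ) / (1 - A) = M := by rw [hMdef, one_div]
  rw [hgoalM]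
  set P : ℕ → ℝ := fun n => ∑ i ∈ Icc 1 n, a i with hPdef
  have hPr : ∀ n, P n = ∑ j ∈ range n, a (j+1) := by
    intro n
    simp only [hPdef]
    rw [← Finset.Ico_add_one_right_eq_Icc, Finset.sum_Ico_eq_sum_range]
    simp [add_comm]
  have hPA : ∀ n, P n ≤ A := by
    intro n
    rw [hPr n]
    exact Summable.sum_le_tsum _ (fun i _ => ha _) hsum
  have hPtend : Tendsto P atTop (𝓝 A) := by
    have h := hsum.hasSum.tendsto_sum_nat
    exact h.congr fun n => (hPr n).symm
  set T : ℕ → ℝ := fun k => A - P (k-1) with hTdef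
  have hT0 : ∀ k, 0 ≤ T k := by
    intro k
    simp only [hTdef]
    linarith [hPA (k-1)]
  have hTtend : Tendsto T atTop (𝓝 0) := by
    have h := (tendsto_const_nhds (x := A) (f := atTop (α := ℕ))).sub
      (hPtend.comp (tendsto_sub_atTop_nat 1))
    simpa using h
  -- bounds for G1
  have hG : ∀ k, 1 ≤ k → 0 ≤ G1 k ∧ G1 k ≤ M := by
    intro k
    induction k using Nat.strong_induction_on with
    | _ k ih =>
      intro hk
      rcases eq_or_lt_of_le hk with h1 | h2
      · rw [← h1, hG11]; exact ⟨zero_le_one, hM1⟩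
      · rw [hG1 k h2]
        have hmem : ∀ i ∈ Icc 1 (k-1), 0 ≤ a i * G1 (k-i) ∧ a i * G1 (k-i) ≤ a i * M := by
          intro i hi
          simp only [mem_Icc] at hi
          obtain ⟨hg0, hgM⟩ := ih (k - i) (by omega) (by omega)
          exact ⟨mul_nonneg (ha i) hg0, mul_le_mul_of_nonneg_left hgM (ha i)⟩
        have hsum0 : 0 ≤ ∑ i ∈ Icc 1 (k-1), a i * G1 (k-i) :=
          Finset.sum_nonneg fun i hi => (hmem i hi).1
        have hsumM : ∑ i ∈ Icc 1 (k-1), a i * G1 (k-i) ≤ A * M := by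
          calc ∑ i ∈ Icc 1 (k-1), a i * G1 (k-i) ≤ ∑ i ∈ Icc 1 (k-1), a i * M :=
                Finset.sum_le_sum fun i hi => (hmem i hi).2
            _ = P (k-1) * M := by simp only [hPdef]; rw [Finset.sum_mul]
            _ ≤ A * M := mul_le_mul_of_nonneg_right (hPA _) hM0
        constructor
        · linarith
        · linarith
  set S : ℕ → ℝ := fun n => ∑ k ∈ Icc 1 n, G1 k with hSdef
  have hIccIoc : ∀ n : ℕ, Icc 1 n = Ioc 0 n := by
    intro n; rw [← Finset.Icc_add_one_left_eq_Ioc]; rfl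
  have hS0 : ∀ n, 0 ≤ S n := by
    intro n
    apply Finset.sum_nonneg
    intro k hk
    simp only [mem_Icc] at hk
    exact (hG k hk.1).1
  have hSle : ∀ n : ℕ, S n ≤ (n:ℝ) * M := by
    intro n
    calc S n ≤ ∑ k ∈ Icc 1 n, M := by
          apply Finset.sum_le_sum
          intro k hk
          simp only [mem_Icc] at hk
          exact (hG k hk.1).2
      _ = (n:ℝ) * M := by
          rw [Finset.sum_const, Nat.card_Icc]
          simp [nsmul_eq_mul]
  have hSdiff : ∀ m n : ℕ, m ≤ n → S n ≤ S m + ((n - m : ℕ) : ℝ) * M := by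
    intro m n h
    have key : S m + ∑ k ∈ Ioc m n, G1 k = S n := by
      simp only [hSdef, hIccIoc]
      exact Finset.sum_Ioc_consecutive _ (Nat.zero_le m) h
    have hb : ∑ k ∈ Ioc m n, G1 k ≤ ((n - m : ℕ) : ℝ) * M := by
      calc ∑ k ∈ Ioc m n, G1 k ≤ ∑ k ∈ Ioc m n, M := by
            apply Finset.sum_le_sum
            intro k hk
            simp only [mem_Ioc] at hk
            exact (hG k (by omega)).2
        _ = ((n - m : ℕ) : ℝ) * M := by
            rw [Finset.sum_const, Nat.card_Ioc, nsmul_eq_mul]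
    linarith
  -- key renewal identity for partial sums
  have hSrec : ∀ n : ℕ, 1 ≤ n → S n = (n:ℝ) + ∑ i ∈ Icc 1 (n-1), a i * S (n - i) := by
    intro n hn
    have h1 : S n = G1 1 + ∑ k ∈ Ioc 1 n, G1 k := by
      simp only [hSdef, hIccIoc]
      rw [← Finset.sum_Ioc_consecutive G1 (Nat.zero_le 1) hn]
      congr 1
      simp
    have h2 : ∑ k ∈ Ioc 1 n, G1 k
        = ∑ k ∈ Ioc 1 n, (1 + ∑ i ∈ Icc 1 (k-1), a i * G1 (k-i)) := by
      apply Finset.sum_congr rfl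
      intro k hk
      simp only [mem_Ioc] at hk
      exact hG1 k hk.1
    have h3 : ∑ k ∈ Ioc 1 n, ∑ i ∈ Icc 1 (k-1), a i * G1 (k-i)
        = ∑ i ∈ Icc 1 (n-1), ∑ k ∈ Icc (i+1) n, a i * G1 (k-i) := by
      refine Finset.sum_comm' ?_
      intro k i
      simp only [mem_Ioc, mem_Icc]
      omega
    have h4 : ∀ i ∈ Icc 1 (n-1), ∑ k ∈ Icc (i+1) n, a i * G1 (k-i) = a i * S (n - i) := by
      intro i _
      rw [← Finset.mul_sum]
      congr 1
      simp only [hSdef]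
      rw [← Finset.Ico_add_one_right_eq_Icc, ← Finset.Ico_add_one_right_eq_Icc, Finset.sum_Ico_eq_sum_range,
        Finset.sum_Ico_eq_sum_range]
      apply Finset.sum_congr
      · congr 1 <;> omega
      · intro x _; congr 1; omega
    rw [h1, h2, Finset.sum_add_distrib, h3, Finset.sum_congr rfl h4, hG11,
      Finset.sum_const, Nat.card_Ioc, nsmul_eq_mul, mul_one]
    have : ((n - 1 : ℕ) : ℝ) = (n : ℝ) - 1 := by
      have : (1:ℕ) ≤ n := hn
      push_cast [this]
      ring
    rw [this]
    ring
  -- bound Σ i * a_i by sum of tails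
  have hIA : ∀ m : ℕ, ∑ i ∈ Icc 1 m, (i:ℝ) * a i ≤ ∑ k ∈ Icc 1 m, T k := by
    intro m
    have hswap : ∑ i ∈ Icc 1 m, (i:ℝ) * a i = ∑ k ∈ Icc 1 m, ∑ i ∈ Icc k m, a i := by
      have h1 : ∀ i ∈ Icc 1 m, (i:ℝ) * a i = ∑ k ∈ Icc 1 i, a i := by
        intro i _; simp [Nat.card_Icc]
      rw [Finset.sum_congr rfl h1]
      refine Finset.sum_comm' ?_
      intro i k
      simp only [mem_Icc]
      omega
    rw [hswap]
    apply Finset.sum_le_sum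
    intro k hk
    simp only [mem_Icc] at hk
    have hsplit : P (k-1) + ∑ i ∈ Icc k m, a i = P m := by
      simp only [hPdef, hIccIoc]
      have hkk : Icc k m = Ioc (k-1) m := by
        rw [← Finset.Icc_add_one_left_eq_Ioc]
        congr 1
        omega
      rw [hkk]
      exact Finset.sum_Ioc_consecutive _ (Nat.zero_le _) (by omega)
    have := hPA m
    simp only [hTdef]
    linarith
  -- the main lower bound
  have hlow : ∀ n : ℕ, 1 ≤ n →
      (n:ℝ) - M * (∑ k ∈ Icc 1 (n-1), T k) - T n * ((n:ℝ) * M) ≤ (1 - A) * S n := by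
    intro n hn
    have hrec := hSrec n hn
    have hstep : ∑ i ∈ Icc 1 (n-1), a i * (S n - (i:ℝ) * M)
        ≤ ∑ i ∈ Icc 1 (n-1), a i * S (n - i) := by
      apply Finset.sum_le_sum
      intro i hi
      simp only [mem_Icc] at hi
      have h' := hSdiff (n - i) n (by omega)
      have hcast : ((n - (n - i) : ℕ) : ℝ) = (i : ℝ) := by
        congr 1
        omega
      rw [hcast] at h'
      exact mul_le_mul_of_nonneg_left (by linarith) (ha i)
    have hexp : ∑ i ∈ Icc 1 (n-1), a i * (S n - (i:ℝ)*M)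
        = P (n-1) * S n - M * ∑ i ∈ Icc 1 (n-1), (i:ℝ) * a i := by
      simp only [hPdef]
      rw [Finset.sum_mul, Finset.mul_sum, ← Finset.sum_sub_distrib]
      apply Finset.sum_congr rfl
      intro i _
      ring
    have h5 : (1 - P (n-1)) * S n = S n - P (n-1) * S n := by ring
    have h6 : (1 - A) * S n = (1 - P (n-1)) * S n - T n * S n := by
      simp only [hTdef]; ring
    have h7 : T n * S n ≤ T n * ((n:ℝ) * M) :=
      mul_le_mul_of_nonneg_left (hSle n) (hT0 n)
    have h8 : M * ∑ i ∈ Icc 1 (n-1), (i:ℝ) * a i ≤ M * ∑ k ∈ Icc 1 (n-1), T k :=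
      mul_le_mul_of_nonneg_left (hIA (n-1)) hM0
    rw [h6, h5]
    linarith
  -- Cesàro limit of Q n / n
  set Q : ℕ → ℝ := fun n => ∑ k ∈ Icc 1 (n-1), T k with hQdef
  have hTshift : Tendsto (fun j : ℕ => T (j+1)) atTop (𝓝 0) :=
    hTtend.comp (tendsto_add_atTop_nat 1)
  have hR : Tendsto (fun n : ℕ => (n:ℝ)⁻¹ * ∑ j ∈ range n, T (j+1)) atTop (𝓝 0) :=
    hTshift.cesaro
  have hQR : ∀ n : ℕ, Q n ≤ ∑ j ∈ range n, T (j+1) := by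
    intro n
    have hq : Q n = ∑ j ∈ range (n-1), T (j+1) := by
      simp only [hQdef]
      rw [← Finset.Ico_add_one_right_eq_Icc, Finset.sum_Ico_eq_sum_range]
      apply Finset.sum_congr
      · congr 1 <;> omega
      · intro x _; congr 1; omega
    rw [hq]
    exact Finset.sum_le_sum_of_subset_of_nonneg
      (Finset.range_subset_range.2 (by omega)) (fun j _ _ => hT0 _)
  have hQ0 : ∀ n, 0 ≤ Q n := fun n => Finset.sum_nonneg fun k _ => hT0 k
  have hQn : Tendsto (fun n : ℕ => Q n / (n:ℝ)) atTop (𝓝 0) := by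
    apply tendsto_of_tendsto_of_tendsto_of_le_of_le (g := fun _ : ℕ => (0:ℝ))
      tendsto_const_nhds hR
    · intro n
      exact div_nonneg (hQ0 n) (Nat.cast_nonneg n)
    · intro n
      simp only
      rw [div_eq_inv_mul]
      exact mul_le_mul_of_nonneg_left (hQR n) (by positivity)
  -- lower envelope tends to M
  have hloTend : Tendsto (fun n : ℕ => (1 - M * (Q n / n) - T n * M) * M) atTop (𝓝 M) := by
    have h := (((tendsto_const_nhds (x := (1:ℝ)) (f := atTop (α := ℕ))).sub
      ((tendsto_const_nhds (x := M)).mul hQn)).sub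
      (hTtend.mul (tendsto_const_nhds (x := M)))).mul (tendsto_const_nhds (x := M))
    simpa using h
  -- squeeze
  have hshow : Tendsto (fun n : ℕ => S n / (n:ℝ)) atTop (𝓝 M) := by
    apply tendsto_of_tendsto_of_tendsto_of_le_of_le' hloTend
      (tendsto_const_nhds (x := M))
    · filter_upwards [eventually_ge_atTop 1] with n hn
      have hnp : (0:ℝ) < (n:ℝ) := by exact_mod_cast hn
      rw [le_div_iff₀ hnp]
      have h := hlow n hn
      have hexp : (1 - M*(Q n/(n:ℝ)) - T n*M)*M*(n:ℝ)
          = ((n:ℝ) - M*Q n - T n*((n:ℝ)*M))*M := by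
        have hQid : Q n / (n:ℝ) * (n:ℝ) = Q n := div_mul_cancel₀ _ hnp.ne'
        linear_combination (-(M*M)) * hQid
      have hmul : ((n:ℝ) - M*Q n - T n*((n:ℝ)*M)) * M ≤ ((1-A)*S n)*M :=
        mul_le_mul_of_nonneg_right h hM0
      have hid : ((1-A)*S n)*M = S n := by
        rw [hMdef]
        field_simp
      rw [hexp]
      linarith
    · filter_upwards [eventually_ge_atTop 1] with n hn
      have hnp : (0:ℝ) < (n:ℝ) := by exact_mod_cast hn
      rw [div_le_iff₀ hnp]
      linarith [hSle n]
  exact hshow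
end

section
/- Let (a_i)_{i≥1} and (v_i)_{i≥1} be nonnegative reals with A := Σ a_i < 1 and V := Σ v_i < ∞. With G₁ and G₂ defined by G₁(1)=1, G₁(k)=1+Σ_{i=1}^{k-1} a_i G₁(k-i), G₂(1)=0, G₂(k)=Σ_{i=1}^{k-1} a_i G₂(k-i) + (1/2)Σ_{i=1}^{k-1} v_i G₁(k-i)², one has (1/n) Σ_{k=1}^n G₂(k) → V/(2(1-A)³) as n → ∞. -/
open Filter

private lemma sum_Icc_one' (f : ℕ → ℝ) : ∀ n, ∑ i ∈ Finset.Icc 1 n, f i = ∑ j ∈ Finset.range n, f (j + 1) := by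
  intro n
  induction n with
  | zero => simp
  | succ n ih =>
    rw [Finset.sum_Icc_succ_top (by omega) f, ih, Finset.sum_range_succ]

private lemma conv_tendsto (c : ℕ → ℝ) (hc : ∀ i, 0 ≤ c i) (hsc : Summable fun i => c (i + 1))
    (g : ℕ → ℝ) (M L : ℝ) (hg0 : ∀ j, 1 ≤ j → 0 ≤ g j) (hgM : ∀ j, 1 ≤ j → g j ≤ M)
    (hgL : Tendsto (fun j => g (j + 1)) atTop (nhds L)) :
    Tendsto (fun k => ∑ i ∈ Finset.Icc 1 (k - 1), c i * g (k - i)) atTop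
      (nhds ((∑' i : ℕ, c (i + 1)) * L)) := by
  have hM0 : 0 ≤ M := le_trans (hg0 1 le_rfl) (hgM 1 le_rfl)
  set F : ℕ → ℕ → ℝ := fun k j => if j + 2 ≤ k then c (j + 1) * g (k - (j + 1)) else 0 with hF
  have hsum_eq : ∀ k, ∑ i ∈ Finset.Icc 1 (k - 1), c i * g (k - i) = ∑' j, F k j := by
    intro k
    have h1 : ∑' j, F k j = ∑ j ∈ Finset.range (k - 1), F k j := by
      apply tsum_eq_sum
      intro b hb
      simp only [Finset.mem_range, not_lt] at hb
      simp only [hF]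
      rw [if_neg (by omega)]
    rw [h1, sum_Icc_one']
    apply Finset.sum_congr rfl
    intro j hj
    have hj' : j < k - 1 := Finset.mem_range.mp hj
    simp only [hF]
    rw [if_pos (by omega)]
  have key := tendsto_tsum_of_dominated_convergence (𝓕 := atTop) (f := F)
    (g := fun j => c (j + 1) * L) (bound := fun j => c (j + 1) * M) (hsc.mul_right M)
    ?_ ?_
  · have heq : (fun k => ∑ i ∈ Finset.Icc 1 (k - 1), c i * g (k - i))
        = fun k => ∑' j, F k j := funext hsum_eq
    rw [heq, ← tsum_mul_right]
    exact key
  · intro j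
    have h1 : Tendsto (fun k : ℕ => c (j + 1) * g ((k - (j + 2)) + 1)) atTop
        (nhds (c (j + 1) * L)) :=
      ((hgL.comp (tendsto_sub_atTop_nat (j + 2)))).const_mul _
    apply Tendsto.congr' _ h1
    filter_upwards [eventually_ge_atTop (j + 2)] with k hk
    have h2 : k - (j + 1) = (k - (j + 2)) + 1 := by omega
    simp only [Function.comp_apply, hF]
    rw [if_pos hk, h2]
  · apply Filter.Eventually.of_forall
    intro k j
    simp only [hF]
    split_ifs with h
    · rw [Real.norm_eq_abs, abs_of_nonneg (mul_nonneg (hc _) (hg0 _ (by omega)))]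
      exact mul_le_mul_of_nonneg_left (hgM _ (by omega)) (hc _)
    · rw [norm_zero]
      exact mul_nonneg (hc _) hM0

set_option maxHeartbeats 1000000 in
/-- Cesàro convergence of the second-order sequence `G₂`:
`(1/n) ∑_{k=1}^n G₂(k) → V/(2(1-A)³)`. -/
theorem inar_G2_cesaro (a v : ℕ → ℝ) (ha : ∀ i, 0 ≤ a i) (hv : ∀ i, 0 ≤ v i)
    (hsuma : Summable (fun i => a (i + 1)))
    (hA : (∑' i : ℕ, a (i + 1)) < 1)
    (hsumv : Summable (fun i => v (i + 1)))
    (G1 G2 : ℕ → ℝ) (hG11 : G1 1 = 1)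
    (hG1 : ∀ k ≥ 2, G1 k = 1 + ∑ i ∈ Finset.Icc 1 (k - 1), a i * G1 (k - i))
    (hG21 : G2 1 = 0)
    (hG2 : ∀ k ≥ 2, G2 k = (∑ i ∈ Finset.Icc 1 (k - 1), a i * G2 (k - i))
      + (1 / 2) * ∑ i ∈ Finset.Icc 1 (k - 1), v i * (G1 (k - i)) ^ 2) :
    Tendsto (fun n : ℕ => (∑ k ∈ Finset.Icc 1 n, G2 k) / (n : ℝ)) atTop
      (nhds ((∑' i : ℕ, v (i + 1)) / (2 * (1 - ∑' i : ℕ, a (i + 1)) ^ 3))) := by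
  set A := ∑' i : ℕ, a (i + 1) with hAdef
  set V := ∑' i : ℕ, v (i + 1) with hVdef
  have hA0 : 0 ≤ A := tsum_nonneg fun i => ha _
  have h1A : 0 < 1 - A := by linarith
  have hV0 : 0 ≤ V := tsum_nonneg fun i => hv _
  set M : ℝ := (1 - A)⁻¹ with hMdef
  have hMpos : 0 < M := inv_pos.mpr h1A
  have hinv : (1 - A) * M = 1 := mul_inv_cancel₀ (ne_of_gt h1A)
  have hM1 : (1 : ℝ) ≤ M := by nlinarith
  have hpartial_a : ∀ n, ∑ i ∈ Finset.Icc 1 n, a i ≤ A := by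
    intro n
    rw [sum_Icc_one']
    exact Summable.sum_le_tsum _ (fun j _ => ha _) hsuma
  have hpartial_v : ∀ n, ∑ i ∈ Finset.Icc 1 n, v i ≤ V := by
    intro n
    rw [sum_Icc_one']
    exact Summable.sum_le_tsum _ (fun j _ => hv _) hsumv
  -- G1 ≥ 1
  have hg1ge : ∀ k, 1 ≤ k → 1 ≤ G1 k := by
    intro k
    induction k using Nat.strong_induction_on with
    | _ k ih =>
      intro hk
      rcases Nat.lt_or_ge k 2 with h2 | h2
      · have : k = 1 := by omega
        rw [this, hG11]
      · rw [hG1 k h2]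
        have hs : 0 ≤ ∑ i ∈ Finset.Icc 1 (k - 1), a i * G1 (k - i) := by
          apply Finset.sum_nonneg
          intro i hi
          obtain ⟨hi1, hi2⟩ := Finset.mem_Icc.mp hi
          exact mul_nonneg (ha i)
            (le_trans zero_le_one (ih (k - i) (by omega) (by omega)))
        linarith
  -- G1 ≤ M
  have hg1le : ∀ k, 1 ≤ k → G1 k ≤ M := by
    intro k
    induction k using Nat.strong_induction_on with
    | _ k ih =>
      intro hk
      rcases Nat.lt_or_ge k 2 with h2 | h2
      · have : k = 1 := by omega
        rw [this, hG11]; exact hM1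
      · rw [hG1 k h2]
        have h1 : ∑ i ∈ Finset.Icc 1 (k - 1), a i * G1 (k - i)
            ≤ (∑ i ∈ Finset.Icc 1 (k - 1), a i) * M := by
          rw [Finset.sum_mul]
          apply Finset.sum_le_sum
          intro i hi
          obtain ⟨hi1, hi2⟩ := Finset.mem_Icc.mp hi
          exact mul_le_mul_of_nonneg_left (ih (k - i) (by omega) (by omega)) (ha i)
        have h2' : (∑ i ∈ Finset.Icc 1 (k - 1), a i) * M ≤ A * M :=
          mul_le_mul_of_nonneg_right (hpartial_a _) hMpos.le
        nlinarith
  -- G1 monotone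
  have hg1mono : ∀ k, 1 ≤ k → G1 k ≤ G1 (k + 1) := by
    intro k
    induction k using Nat.strong_induction_on with
    | _ k ih =>
      intro hk
      rcases Nat.lt_or_ge k 2 with h2 | h2
      · have hk1 : k = 1 := by omega
        subst hk1
        rw [hG11, hG1 2 le_rfl]
        have e : (2 : ℕ) - 1 = 1 := rfl
        rw [e, Finset.Icc_self, Finset.sum_singleton]
        have e2 : (2 : ℕ) - 1 = 1 := rfl
        rw [e2, hG11]
        nlinarith [ha 1]
      · obtain ⟨m, rfl⟩ : ∃ m, k = m + 2 := ⟨k - 2, by omega⟩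
        rw [hG1 (m + 2) (by omega), hG1 (m + 3) (by omega)]
        have e1 : m + 2 - 1 = m + 1 := rfl
        have e2 : m + 3 - 1 = m + 2 := rfl
        rw [e1, e2, Finset.sum_Icc_succ_top (show 1 ≤ m + 2 by omega)]
        have hterm : ∑ i ∈ Finset.Icc 1 (m + 1), a i * G1 (m + 2 - i)
            ≤ ∑ i ∈ Finset.Icc 1 (m + 1), a i * G1 (m + 3 - i) := by
          apply Finset.sum_le_sum
          intro i hi
          obtain ⟨hi1, hi2⟩ := Finset.mem_Icc.mp hi
          have h3 : m + 3 - i = (m + 2 - i) + 1 := by omega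
          rw [h3]
          exact mul_le_mul_of_nonneg_left (ih (m + 2 - i) (by omega) (by omega)) (ha i)
        have hlast : 0 ≤ a (m + 2) * G1 (m + 3 - (m + 2)) := by
          have h4 : m + 3 - (m + 2) = 1 := by omega
          rw [h4, hG11]
          nlinarith [ha (m + 2)]
        linarith
  -- limit of G1
  have hg1m : Monotone (fun n => G1 (n + 1)) :=
    monotone_nat_of_le_succ fun n => hg1mono (n + 1) (by omega)
  have hg1bdd : BddAbove (Set.range fun n => G1 (n + 1)) := by
    refine ⟨M, ?_⟩
    rintro x ⟨n, rfl⟩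
    exact hg1le (n + 1) (by omega)
  set L1 := ⨆ n, G1 (n + 1) with hL1def
  have hg1lim : Tendsto (fun n => G1 (n + 1)) atTop (nhds L1) :=
    tendsto_atTop_ciSup hg1m hg1bdd
  have hconv1 : Tendsto (fun k => ∑ i ∈ Finset.Icc 1 (k - 1), a i * G1 (k - i)) atTop
      (nhds (A * L1)) :=
    conv_tendsto a ha hsuma G1 M L1 (fun j hj => le_trans zero_le_one (hg1ge j hj))
      hg1le hg1lim
  have hG1eq : Tendsto (fun n => G1 (n + 1)) atTop (nhds (1 + A * L1)) := by
    have h1 : Tendsto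
        (fun n : ℕ => 1 + ∑ i ∈ Finset.Icc 1 ((n + 1) - 1), a i * G1 ((n + 1) - i)) atTop
        (nhds (1 + A * L1)) :=
      (hconv1.comp (tendsto_add_atTop_nat 1)).const_add 1
    apply Tendsto.congr' _ h1
    filter_upwards [eventually_ge_atTop 1] with n hn
    exact (hG1 (n + 1) (by omega)).symm
  have hL1eq : (1 - A) * L1 = 1 := by
    have h := tendsto_nhds_unique hg1lim hG1eq
    linarith
  -- forcing limit for G2
  have hg1sqlim : Tendsto (fun n => (G1 (n + 1)) ^ 2) atTop (nhds (L1 ^ 2)) := hg1lim.pow 2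
  have hconvv : Tendsto (fun k => ∑ i ∈ Finset.Icc 1 (k - 1), v i * (G1 (k - i)) ^ 2) atTop
      (nhds (V * L1 ^ 2)) :=
    conv_tendsto v hv hsumv (fun j => (G1 j) ^ 2) (M ^ 2) (L1 ^ 2)
      (fun j hj => sq_nonneg _)
      (fun j hj => by
        have h0 : 0 ≤ G1 j := le_trans zero_le_one (hg1ge j hj)
        have hle := hg1le j hj
        show G1 j ^ 2 ≤ M ^ 2
        nlinarith)
      hg1sqlim
  -- bound for G2
  set B := V * M ^ 2 * M / 2 with hBdef
  have hB0 : 0 ≤ B := by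
    rw [hBdef]; positivity
  have hBeq : (1 - A) * B = V * M ^ 2 / 2 := by
    rw [hBdef]
    linear_combination (V * M ^ 2 / 2) * hinv
  -- G2 ≥ 0
  have hg2ge : ∀ k, 1 ≤ k → 0 ≤ G2 k := by
    intro k
    induction k using Nat.strong_induction_on with
    | _ k ih =>
      intro hk
      rcases Nat.lt_or_ge k 2 with h2 | h2
      · have : k = 1 := by omega
        rw [this, hG21]
      · rw [hG2 k h2]
        have hs1 : 0 ≤ ∑ i ∈ Finset.Icc 1 (k - 1), a i * G2 (k - i) := by
          apply Finset.sum_nonneg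
          intro i hi
          obtain ⟨hi1, hi2⟩ := Finset.mem_Icc.mp hi
          exact mul_nonneg (ha i) (ih (k - i) (by omega) (by omega))
        have hs2 : 0 ≤ ∑ i ∈ Finset.Icc 1 (k - 1), v i * (G1 (k - i)) ^ 2 := by
          apply Finset.sum_nonneg
          intro i hi
          exact mul_nonneg (hv i) (sq_nonneg _)
        linarith
  -- G2 ≤ B
  have hg2le : ∀ k, 1 ≤ k → G2 k ≤ B := by
    intro k
    induction k using Nat.strong_induction_on with
    | _ k ih =>
      intro hk
      rcases Nat.lt_or_ge k 2 with h2 | h2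
      · have : k = 1 := by omega
        rw [this, hG21]; exact hB0
      · rw [hG2 k h2]
        have h1 : ∑ i ∈ Finset.Icc 1 (k - 1), a i * G2 (k - i)
            ≤ (∑ i ∈ Finset.Icc 1 (k - 1), a i) * B := by
          rw [Finset.sum_mul]
          apply Finset.sum_le_sum
          intro i hi
          obtain ⟨hi1, hi2⟩ := Finset.mem_Icc.mp hi
          exact mul_le_mul_of_nonneg_left (ih (k - i) (by omega) (by omega)) (ha i)
        have h1' : (∑ i ∈ Finset.Icc 1 (k - 1), a i) * B ≤ A * B :=
          mul_le_mul_of_nonneg_right (hpartial_a _) hB0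
        have h2v : ∑ i ∈ Finset.Icc 1 (k - 1), v i * (G1 (k - i)) ^ 2
            ≤ (∑ i ∈ Finset.Icc 1 (k - 1), v i) * M ^ 2 := by
          rw [Finset.sum_mul]
          apply Finset.sum_le_sum
          intro i hi
          obtain ⟨hi1, hi2⟩ := Finset.mem_Icc.mp hi
          have h0 : 0 ≤ G1 (k - i) := le_trans zero_le_one (hg1ge (k - i) (by omega))
          have hle := hg1le (k - i) (by omega)
          have hsq : G1 (k - i) ^ 2 ≤ M ^ 2 := by nlinarith
          exact mul_le_mul_of_nonneg_left hsq (hv i)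
        have h2v' : (∑ i ∈ Finset.Icc 1 (k - 1), v i) * M ^ 2 ≤ V * M ^ 2 :=
          mul_le_mul_of_nonneg_right (hpartial_v _) (sq_nonneg M)
        nlinarith
  -- G2 monotone
  have hg2mono : ∀ k, 1 ≤ k → G2 k ≤ G2 (k + 1) := by
    intro k
    induction k using Nat.strong_induction_on with
    | _ k ih =>
      intro hk
      rcases Nat.lt_or_ge k 2 with h2 | h2
      · have hk1 : k = 1 := by omega
        subst hk1
        rw [hG21, hG2 2 le_rfl]
        have e : (2 : ℕ) - 1 = 1 := rfl
        rw [e, Finset.Icc_self, Finset.sum_singleton, Finset.sum_singleton]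
        have e2 : (2 : ℕ) - 1 = 1 := rfl
        rw [e2, hG21, hG11]
        nlinarith [hv 1]
      · obtain ⟨m, rfl⟩ : ∃ m, k = m + 2 := ⟨k - 2, by omega⟩
        rw [hG2 (m + 2) (by omega), hG2 (m + 3) (by omega)]
        have e1 : m + 2 - 1 = m + 1 := rfl
        have e2 : m + 3 - 1 = m + 2 := rfl
        rw [e1, e2, Finset.sum_Icc_succ_top (show 1 ≤ m + 2 by omega),
          Finset.sum_Icc_succ_top (show 1 ≤ m + 2 by omega)]
        have hterm1 : ∑ i ∈ Finset.Icc 1 (m + 1), a i * G2 (m + 2 - i)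
            ≤ ∑ i ∈ Finset.Icc 1 (m + 1), a i * G2 (m + 3 - i) := by
          apply Finset.sum_le_sum
          intro i hi
          obtain ⟨hi1, hi2⟩ := Finset.mem_Icc.mp hi
          have h3 : m + 3 - i = (m + 2 - i) + 1 := by omega
          rw [h3]
          exact mul_le_mul_of_nonneg_left (ih (m + 2 - i) (by omega) (by omega)) (ha i)
        have hterm2 : ∑ i ∈ Finset.Icc 1 (m + 1), v i * (G1 (m + 2 - i)) ^ 2
            ≤ ∑ i ∈ Finset.Icc 1 (m + 1), v i * (G1 (m + 3 - i)) ^ 2 := by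
          apply Finset.sum_le_sum
          intro i hi
          obtain ⟨hi1, hi2⟩ := Finset.mem_Icc.mp hi
          have h3 : m + 3 - i = (m + 2 - i) + 1 := by omega
          rw [h3]
          have h0 : 0 ≤ G1 (m + 2 - i) := le_trans zero_le_one (hg1ge (m + 2 - i) (by omega))
          have hmono := hg1mono (m + 2 - i) (by omega)
          have hsq : (G1 (m + 2 - i)) ^ 2 ≤ (G1 (m + 2 - i + 1)) ^ 2 := by nlinarith
          exact mul_le_mul_of_nonneg_left hsq (hv i)
        have hlast1 : a (m + 2) * G2 (m + 3 - (m + 2)) = 0 := by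
          have h4 : m + 3 - (m + 2) = 1 := by omega
          rw [h4, hG21, mul_zero]
        have hlast2 : 0 ≤ v (m + 2) * (G1 (m + 3 - (m + 2))) ^ 2 :=
          mul_nonneg (hv (m + 2)) (sq_nonneg _)
        linarith
  -- limit of G2
  have hg2m : Monotone (fun n => G2 (n + 1)) :=
    monotone_nat_of_le_succ fun n => hg2mono (n + 1) (by omega)
  have hg2bdd : BddAbove (Set.range fun n => G2 (n + 1)) := by
    refine ⟨B, ?_⟩
    rintro x ⟨n, rfl⟩
    exact hg2le (n + 1) (by omega)
  set L2 := ⨆ n, G2 (n + 1) with hL2def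
  have hg2lim : Tendsto (fun n => G2 (n + 1)) atTop (nhds L2) :=
    tendsto_atTop_ciSup hg2m hg2bdd
  have hconv2 : Tendsto (fun k => ∑ i ∈ Finset.Icc 1 (k - 1), a i * G2 (k - i)) atTop
      (nhds (A * L2)) :=
    conv_tendsto a ha hsuma G2 B L2 hg2ge hg2le hg2lim
  have hG2eq : Tendsto (fun n => G2 (n + 1)) atTop
      (nhds (A * L2 + (1 / 2) * (V * L1 ^ 2))) := by
    have h1 := hconv2.comp (tendsto_add_atTop_nat 1)
    have h2 := (hconvv.comp (tendsto_add_atTop_nat 1)).const_mul (1 / 2 : ℝ)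
    have h3 := h1.add h2
    apply Tendsto.congr' _ h3
    filter_upwards [eventually_ge_atTop 1] with n hn
    simp only [Function.comp_apply]
    exact (hG2 (n + 1) (by omega)).symm
  have hL2eq : (1 - A) * L2 = (1 / 2) * (V * L1 ^ 2) := by
    have h := tendsto_nhds_unique hg2lim hG2eq
    linarith
  have hfinal : L2 = V / (2 * (1 - A) ^ 3) := by
    rw [eq_div_iff (by positivity)]
    linear_combination 2 * (1 - A) ^ 2 * hL2eq + V * ((1 - A) * L1 + 1) * hL1eq
  rw [← hfinal]
  have hces := hg2lim.cesaro
  apply Tendsto.congr _ hces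
  intro n
  rw [sum_Icc_one' G2 n, div_eq_inv_mul]
end

section
/- Consider an INAR(∞) process with empty history: X₁ = ε₁ and X_n = ε_n + Σ_{k=1}^{n-1} Σ_{l=1}^{X_{n-k}} ξ_l^{(n,k)} for n ≥ 2, where ε_n are i.i.d. copies of ε, ξ_l^{(n,k)} are i.i.d. copies of ξ_k over n and l, independent of (ε_n), and independent across distinct k. Then for any θ for which all expressions are finite, E[exp(θ Σ_{k=1}^n X_k)] = Π_{k=1}^n E[e^{f_k(θ) ε}], where f₁(θ) = θ and f_k(θ) = θ + Σ_{j=1}^{k-1} log E[e^{f_j(θ) ξ_{k-j}}] for k ≥ 2. -/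
open MeasureTheory ProbabilityTheory Filter
open scoped ENNReal

namespace InarMgfAux

noncomputable def E (x : ℝ) : ℝ≥0∞ := ENNReal.ofReal (Real.exp x)

lemma E_def (x : ℝ) : E x = ENNReal.ofReal (Real.exp x) := rfl

lemma E_add (a b : ℝ) : E (a + b) = E a * E b := by
  simp [E, Real.exp_add, ENNReal.ofReal_mul (Real.exp_nonneg a)]

lemma E_sum {α : Type*} (s : Finset α) (g : α → ℝ) :
    E (∑ i ∈ s, g i) = ∏ i ∈ s, E (g i) := by
  simp [E, Real.exp_sum, ENNReal.ofReal_prod_of_nonneg (fun i _ => (Real.exp_pos _).le)]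

lemma sum_icc_meas {α : Type*} [MeasurableSpace α] {N : α → ℕ} (hN : Measurable N)
    {g : ℕ → α → ℕ} (hg : ∀ l, Measurable (g l)) :
    Measurable fun ω => ∑ l ∈ Finset.Icc 1 (N ω), g l ω := by
  have h : Measurable (fun p : α × ℕ => ∑ l ∈ Finset.Icc 1 p.2, g l p.1) :=
    measurable_from_prod_countable_left fun n => by
      simpa using Finset.measurable_sum (Finset.Icc 1 n) fun l _ => hg l
  exact h.comp (measurable_id.prodMk hN)

lemma lintegral_prod_iIndep {Ω ι : Type*} {mΩ : MeasurableSpace Ω} {μ : Measure Ω}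
    [IsProbabilityMeasure μ] {s : ι → MeasurableSpace Ω} (h_le : ∀ i, s i ≤ mΩ)
    (hindep : ProbabilityTheory.iIndep s μ) (S : Finset ι) {φ : ι → Ω → ℝ≥0∞}
    (hφ : ∀ i, Measurable[s i] (φ i)) :
    ∫⁻ ω, ∏ i ∈ S, φ i ω ∂μ = ∏ i ∈ S, ∫⁻ ω, φ i ω ∂μ := by
  classical
  induction S using Finset.induction with
  | empty => simp
  | @insert a S' ha ih =>
    have h1 : Indep (⨆ i ∈ ({a}ᶜ : Set ι), s i) (⨆ i ∈ ({a}ᶜᶜ : Set ι), s i) μ :=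
      ProbabilityTheory.indep_biSup_compl h_le hindep ({a}ᶜ)
    have h2 : Indep (s a) (⨆ i ∈ ({a}ᶜ : Set ι), s i) μ := by
      have : (⨆ i ∈ (({a}ᶜᶜ) : Set ι), s i) = s a := by
        rw [compl_compl]; simp
      rw [this] at h1
      exact h1.symm
    have h3 : Indep (s a) (⨆ i ∈ (S' : Set ι), s i) μ := by
      refine indep_of_indep_of_le_right h2 ?_
      refine iSup₂_le fun i hi => ?_
      exact le_iSup₂ (f := fun i (_ : i ∈ ({a}ᶜ : Set ι)) => s i) i
        (Set.mem_compl_singleton_iff.mpr (fun h => ha (by rwa [h] at hi)))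
    have hres := lintegral_mul_eq_lintegral_mul_lintegral_of_independent_measurableSpace
      (h_le a) (iSup₂_le fun i _ => h_le i) h3 (hφ a)
      (Finset.measurable_prod S' (fun i hi =>
        (hφ i).mono (le_iSup₂ (f := fun i (_ : i ∈ (S' : Set ι)) => s i) i (by simpa using hi))
          le_rfl))
    simp_rw [Finset.prod_insert ha]
    rw [hres, ih]

end InarMgfAux

open InarMgfAux

/-- Moment generating function identity for the INAR(∞) process with empty history:
`E[exp(θ ∑_{k=1}^n X_k)] = ∏_{k=1}^n E[e^{f_k(θ) ε}]` where `f₁(θ) = θ` and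
`f_k(θ) = θ + ∑_{j=1}^{k-1} log E[e^{f_j(θ) ξ_{k-j}}]`. -/
theorem inar_mgf_identity {Ω : Type*} [MeasurableSpace Ω] (μ : Measure Ω)
    [IsProbabilityMeasure μ]
    (ε : ℕ → Ω → ℕ) (ξ : ℕ → ℕ → ℕ → Ω → ℕ) (ε0 : Ω → ℕ) (ξ0 : ℕ → Ω → ℕ)
    (hmeasε : ∀ n, Measurable (ε n)) (hmeasξ : ∀ n k l, Measurable (ξ n k l))
    (hmeasε0 : Measurable ε0) (hmeasξ0 : ∀ k, Measurable (ξ0 k))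
    -- the ε_n are identically distributed as ε, the ξ_l^{(n,k)} as ξ_k
    (hεdist : ∀ n, μ.map (ε n) = μ.map ε0)
    (hξdist : ∀ n k l, μ.map (ξ n k l) = μ.map (ξ0 k))
    -- mutual independence of the whole family
    (hindep : iIndepFun
      (Sum.elim ε (fun p : ℕ × ℕ × ℕ => ξ p.1 p.2.1 p.2.2)) μ)
    -- INAR(∞) dynamics with empty history
    (X : ℕ → Ω → ℕ) (hX1 : X 1 = ε 1)
    (hXn : ∀ n ≥ 2, ∀ ω, X n ω = ε n ω +
      ∑ k ∈ Finset.Icc 1 (n - 1), ∑ l ∈ Finset.Icc 1 (X (n - k) ω), ξ n k l ω)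
    -- the recursively defined exponents f_k
    (θ : ℝ) (f : ℕ → ℝ) (hf1 : f 1 = θ)
    (hfk : ∀ k ≥ 2, f k = θ + ∑ j ∈ Finset.Icc 1 (k - 1),
      Real.log (∫ ω, Real.exp (f j * (ξ0 (k - j) ω : ℝ)) ∂μ))
    -- finiteness of all the expressions involved
    (hintξ : ∀ k j, Integrable (fun ω => Real.exp (f j * (ξ0 k ω : ℝ))) μ)
    (hintε : ∀ k, Integrable (fun ω => Real.exp (f k * (ε0 ω : ℝ))) μ)
    (hintX : ∀ n : ℕ, 1 ≤ n →
      Integrable (fun ω => Real.exp (θ * ∑ k ∈ Finset.Icc 1 n, (X k ω : ℝ))) μ)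
    (n : ℕ) (hn : 1 ≤ n) :
    ∫ ω, Real.exp (θ * ∑ k ∈ Finset.Icc 1 n, (X k ω : ℝ)) ∂μ =
      ∏ k ∈ Finset.Icc 1 n, ∫ ω, Real.exp (f k * (ε0 ω : ℝ)) ∂μ := by
  classical
  set g : ℕ ⊕ ℕ × ℕ × ℕ → Ω → ℕ :=
    Sum.elim ε (fun p : ℕ × ℕ × ℕ => ξ p.1 p.2.1 p.2.2) with hg
  set idx : ℕ ⊕ ℕ × ℕ × ℕ → ℕ := Sum.elim id Prod.fst with hidx
  set sa : ℕ ⊕ ℕ × ℕ × ℕ → MeasurableSpace Ω :=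
    fun i => MeasurableSpace.comap (g i) inferInstance with hsa
  set 𝓕 : ℕ → MeasurableSpace Ω := fun m => ⨆ i ∈ {i | idx i ≤ m}, sa i with hF
  have hgmeas : ∀ i, Measurable (g i) := by
    rintro (i | ⟨a, b, c⟩)
    · exact hmeasε i
    · exact hmeasξ a b c
  have hsale : ∀ i, sa i ≤ ‹MeasurableSpace Ω› := fun i =>
    measurable_iff_comap_le.mp (hgmeas i)
  have hFle : ∀ m, 𝓕 m ≤ ‹MeasurableSpace Ω› := fun m => iSup₂_le fun i _ => hsale i
  have hiIndep : ProbabilityTheory.iIndep sa μ := hindep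
  have hgsa : ∀ i, Measurable[sa i] (g i) := fun i => Measurable.of_comap_le le_rfl
  have hgF : ∀ m i, idx i ≤ m → Measurable[𝓕 m] (g i) := fun m i hi =>
    (hgsa i).mono (le_iSup₂ (f := fun i (_ : i ∈ {i | idx i ≤ m}) => sa i) i hi) le_rfl
  -- measurability of X with respect to the filtration
  have measXF : ∀ m', ∀ m, 1 ≤ m' → m' ≤ m → Measurable[𝓕 m] (X m') := by
    intro m'
    induction m' using Nat.strong_induction_on with
    | _ m' ih =>
      intro m h1 hm
      rcases eq_or_lt_of_le h1 with h | h
      · rw [← h, hX1]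
        exact hgF m (Sum.inl 1) (by simpa [hidx] using (h ▸ hm))
      · have h2 : 2 ≤ m' := h
        have hXm' : X m' = fun ω => ε m' ω +
            ∑ k ∈ Finset.Icc 1 (m' - 1), ∑ l ∈ Finset.Icc 1 (X (m' - k) ω), ξ m' k l ω :=
          funext (hXn m' h2)
        rw [hXm']
        refine Measurable.add (hgF m (Sum.inl m') (by simpa [hidx] using hm)) ?_
        refine Finset.measurable_sum _ fun k hk => ?_
        have hk' := Finset.mem_Icc.mp hk
        have hNmeas : Measurable[𝓕 m] (X (m' - k)) := ih (m' - k) (by omega) m (by omega) (by omega)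
        exact @sum_icc_meas Ω (𝓕 m) (X (m' - k)) hNmeas (fun l => ξ m' k l)
          (fun l => hgF m (Sum.inr (m', k, l)) (by simpa [hidx] using hm))
  have measX : ∀ m', 1 ≤ m' → Measurable (X m') := fun m' h =>
    (measXF m' m' h le_rfl).mono (hFle m') le_rfl
  -- the key one-step integration identity
  have step : ∀ m0, 2 ≤ m0 → ∀ c : ℕ → ℝ,
      (∀ k, 1 ≤ k → k ≤ m0 - 1 → Integrable (fun ω => Real.exp (c m0 * (ξ0 k ω : ℝ))) μ) →
      ∫⁻ ω, ∏ m ∈ Finset.Icc 1 m0, E (c m * (X m ω : ℝ)) ∂μ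
        = (∫⁻ ω, E (c m0 * (ε0 ω : ℝ)) ∂μ) *
          ∫⁻ ω, ∏ m ∈ Finset.Icc 1 (m0 - 1),
            E ((c m + Real.log (∫ ω', Real.exp (c m0 * (ξ0 (m0 - m) ω' : ℝ)) ∂μ))
              * (X m ω : ℝ)) ∂μ := by
    intro m0 hm0 c hc
    set B : ℕ → ℝ := fun k => ∫ ω, Real.exp (c m0 * (ξ0 k ω : ℝ)) ∂μ with hB
    set Aε : ℝ≥0∞ := ∫⁻ ω, E (c m0 * (ε0 ω : ℝ)) ∂μ with hAe
    have hBpos : ∀ k, 1 ≤ k → k ≤ m0 - 1 → 0 < B k := fun k h1 h2 =>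
      integral_exp_pos (hc k h1 h2)
    have hBlint : ∀ k, 1 ≤ k → k ≤ m0 - 1 →
        (∫⁻ ω, E (c m0 * (ξ0 k ω : ℝ)) ∂μ) = ENNReal.ofReal (B k) := fun k h1 h2 =>
      (ofReal_integral_eq_lintegral_ofReal (hc k h1 h2)
        (Filter.Eventually.of_forall fun ω => (Real.exp_pos _).le)).symm
    -- the countable partition according to the values of X_1, ..., X_{m0-1}
    set vv : (Fin (m0 - 1) → ℕ) → ℕ → ℕ :=
      fun v m => if h : 1 ≤ m ∧ m ≤ m0 - 1 then v ⟨m - 1, by omega⟩ else 0 with hvv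
    set A : (Fin (m0 - 1) → ℕ) → Set Ω :=
      fun v => {ω | ∀ i : Fin (m0 - 1), X (i.1 + 1) ω = v i} with hA
    have hmemA : ∀ v ω, ω ∈ A v ↔ ∀ m, 1 ≤ m → m ≤ m0 - 1 → X m ω = vv v m := by
      intro v ω
      constructor
      · intro h m h1 h2
        have := h ⟨m - 1, by omega⟩
        simp only [hvv]
        rw [dif_pos ⟨h1, h2⟩]
        simpa [Nat.sub_add_cancel h1] using this
      · intro h i
        have := h (i.1 + 1) (by omega) (by omega)
        simp only [hvv] at this
        rw [dif_pos ⟨by omega, by omega⟩] at this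
        simpa using this
    have hAmeasF : ∀ v, MeasurableSet[𝓕 (m0 - 1)] (A v) := by
      intro v
      have : A v = ⋂ i : Fin (m0 - 1), X (i.1 + 1) ⁻¹' {v i} := by
        ext ω; simp [hA, Set.mem_iInter]
      rw [this]
      exact MeasurableSet.iInter fun i =>
        measXF (i.1 + 1) (m0 - 1) (by omega) (by omega) (measurableSet_singleton (v i))
    have hAmeas : ∀ v, MeasurableSet (A v) := fun v => hFle (m0 - 1) _ (hAmeasF v)
    have hAdisj : Pairwise (Function.onFun Disjoint A) := by
      intro v w hvw
      rw [Function.onFun, Set.disjoint_left]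
      intro ω hv hw
      exact hvw (funext fun i => (hv i).symm.trans (hw i))
    have hAcover : (⋃ v, A v) = Set.univ := by
      ext ω
      simp only [Set.mem_iUnion, Set.mem_univ, iff_true]
      exact ⟨fun i => X (i.1 + 1) ω, fun i => rfl⟩
    have hdecomp : ∀ φ : Ω → ℝ≥0∞, ∫⁻ ω, φ ω ∂μ = ∑' v, ∫⁻ ω in A v, φ ω ∂μ := by
      intro φ
      have := lintegral_iUnion (μ := μ) hAmeas hAdisj φ
      rwa [hAcover, Measure.restrict_univ] at this
    -- termwise identity
    have hterm : ∀ v, ∫⁻ ω in A v, ∏ m ∈ Finset.Icc 1 m0, E (c m * (X m ω : ℝ)) ∂μ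
        = Aε * ∫⁻ ω in A v, ∏ m ∈ Finset.Icc 1 (m0 - 1),
            E ((c m + Real.log (B (m0 - m))) * (X m ω : ℝ)) ∂μ := by
      intro v
      set K : ℝ≥0∞ := ∏ m ∈ Finset.Icc 1 (m0 - 1), E (c m * (vv v m : ℝ)) with hK
      set S : Finset (ℕ ⊕ ℕ × ℕ × ℕ) := insert (Sum.inl m0)
        ((Finset.Icc 1 (m0 - 1)).biUnion fun k =>
          (Finset.Icc 1 (vv v (m0 - k))).image fun l => Sum.inr (m0, k, l)) with hS
      set H : Ω → ℝ≥0∞ := fun ω => ∏ i ∈ S, E (c m0 * (g i ω : ℝ)) with hH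
      have hinl : (Sum.inl m0 : ℕ ⊕ ℕ × ℕ × ℕ) ∉
          (Finset.Icc 1 (m0 - 1)).biUnion fun k =>
            (Finset.Icc 1 (vv v (m0 - k))).image fun l => Sum.inr (m0, k, l) := by
        simp
      have hidxS : ∀ i ∈ S, idx i = m0 := by
        intro i hi
        rw [hS] at hi
        rcases Finset.mem_insert.mp hi with h | h
        · rw [h]; rfl
        · rcases Finset.mem_biUnion.mp h with ⟨k, _, hk⟩
          rcases Finset.mem_image.mp hk with ⟨l, _, rfl⟩
          rfl
      have hHmeas : Measurable H :=
        Finset.measurable_prod _ fun i _ =>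
          (measurable_from_nat (f := fun j : ℕ => E (c m0 * (j : ℝ)))).comp (hgmeas i)
      have hsplit : Finset.Icc 1 m0 = insert m0 (Finset.Icc 1 (m0 - 1)) := by
        ext x; simp only [Finset.mem_Icc, Finset.mem_insert]; omega
      have hm0notin : m0 ∉ Finset.Icc 1 (m0 - 1) := by
        simp only [Finset.mem_Icc]; omega
      have hdisjS : (↑(Finset.Icc 1 (m0 - 1)) : Set ℕ).PairwiseDisjoint
          (fun k => (Finset.Icc 1 (vv v (m0 - k))).image fun l =>
            (Sum.inr (m0, k, l) : ℕ ⊕ ℕ × ℕ × ℕ)) := by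
        intro k _ k' _ hne
        rw [Function.onFun, Finset.disjoint_left]
        rintro a ha ha'
        rcases Finset.mem_image.mp ha with ⟨l, _, rfl⟩
        rcases Finset.mem_image.mp ha' with ⟨l', _, h⟩
        apply hne
        injection h with h2
        exact (congrArg (fun q : ℕ × ℕ × ℕ => q.2.1) h2).symm
      have hinj : ∀ k, ∀ x ∈ Finset.Icc 1 (vv v (m0 - k)), ∀ y ∈ Finset.Icc 1 (vv v (m0 - k)),
          (Sum.inr (m0, k, x) : ℕ ⊕ ℕ × ℕ × ℕ) = Sum.inr (m0, k, y) → x = y := by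
        intro k x _ y _ h
        injection h with h2
        exact congrArg (fun q : ℕ × ℕ × ℕ => q.2.2) h2
      have hHeq : ∀ ω ∈ A v, E (c m0 * (X m0 ω : ℝ)) = H ω := by
        intro ω hω
        have hXval : ∀ k, 1 ≤ k → k ≤ m0 - 1 → X (m0 - k) ω = vv v (m0 - k) :=
          fun k h1 h2 => (hmemA v ω).mp hω (m0 - k) (by omega) (by omega)
        calc E (c m0 * (X m0 ω : ℝ))
            = E (c m0 * (ε m0 ω : ℝ) + ∑ k ∈ Finset.Icc 1 (m0 - 1),
                ∑ l ∈ Finset.Icc 1 (vv v (m0 - k)), c m0 * (ξ m0 k l ω : ℝ)) := by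
              rw [hXn m0 hm0 ω]
              push_cast
              rw [mul_add, Finset.mul_sum]
              congr 2
              refine Finset.sum_congr rfl fun k hk => ?_
              have hk' := Finset.mem_Icc.mp hk
              rw [hXval k hk'.1 hk'.2, Finset.mul_sum]
          _ = E (c m0 * (ε m0 ω : ℝ)) * ∏ k ∈ Finset.Icc 1 (m0 - 1),
                ∏ l ∈ Finset.Icc 1 (vv v (m0 - k)), E (c m0 * (ξ m0 k l ω : ℝ)) := by
              rw [E_add, E_sum]
              congr 1
              exact Finset.prod_congr rfl fun k _ => E_sum _ _
          _ = H ω := by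
              simp only [hH, hS]
              rw [Finset.prod_insert hinl, Finset.prod_biUnion hdisjS]
              congr 1
              refine Finset.prod_congr rfl fun k _ => ?_
              rw [Finset.prod_image (hinj k)]
              rfl
      -- left-hand side: pull out the constant and use independence
      have hLHS1 : ∫⁻ ω in A v, ∏ m ∈ Finset.Icc 1 m0, E (c m * (X m ω : ℝ)) ∂μ
          = ∫⁻ ω in A v, K * H ω ∂μ := by
        refine setLIntegral_congr_fun (hAmeas v) (fun ω hω => ?_)
        rw [hsplit, Finset.prod_insert hm0notin, hHeq ω hω]
        have hKeq : ∏ m ∈ Finset.Icc 1 (m0 - 1), E (c m * (X m ω : ℝ)) = K := by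
          refine Finset.prod_congr rfl fun m hm => ?_
          have hm' := Finset.mem_Icc.mp hm
          rw [(hmemA v ω).mp hω m hm'.1 hm'.2]
        rw [hKeq, mul_comm]
      have hLHS2 : ∫⁻ ω in A v, K * H ω ∂μ = K * ∫⁻ ω in A v, H ω ∂μ :=
        lintegral_const_mul K hHmeas
      have hindH : ∫⁻ ω in A v, H ω ∂μ = μ (A v) * ∫⁻ ω, H ω ∂μ := by
        have h_ind : Indep (𝓕 (m0 - 1)) (⨆ i ∈ {i | idx i ≤ m0 - 1}ᶜ, sa i) μ :=
          ProbabilityTheory.indep_biSup_compl hsale hiIndep {i | idx i ≤ m0 - 1}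
        have hmeasind : Measurable[𝓕 (m0 - 1)] ((A v).indicator (1 : Ω → ℝ≥0∞)) :=
          measurable_const.indicator (hAmeasF v)
        have hmeasH2 : Measurable[⨆ i ∈ {i | idx i ≤ m0 - 1}ᶜ, sa i] H := by
          refine Finset.measurable_prod _ fun i hi => ?_
          have h1 : Measurable[sa i] fun ω => E (c m0 * (g i ω : ℝ)) :=
            (measurable_from_nat (f := fun j : ℕ => E (c m0 * (j : ℝ)))).comp (hgsa i)
          refine h1.mono (le_iSup₂ (f := fun i (_ : i ∈ {i | idx i ≤ m0 - 1}ᶜ) => sa i) i ?_)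
            le_rfl
          simp only [Set.mem_compl_iff, Set.mem_setOf_eq]
          rw [hidxS i hi]; omega
        have hkey := lintegral_mul_eq_lintegral_mul_lintegral_of_independent_measurableSpace
          (hFle (m0 - 1)) (iSup₂_le fun i _ => hsale i) h_ind hmeasind hmeasH2
        have heq : ∫⁻ ω, (A v).indicator (1 : Ω → ℝ≥0∞) ω * H ω ∂μ
            = ∫⁻ ω in A v, H ω ∂μ := by
          rw [← lintegral_indicator (hAmeas v)]
          congr 1
          funext ω
          by_cases hω : ω ∈ A v <;> simp [Set.indicator_apply, hω]
        rw [heq, lintegral_indicator_one (hAmeas v)] at hkey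
        exact hkey
      have hpow : ∀ (k : ℕ) (N : ℕ), 1 ≤ k → k ≤ m0 - 1 →
          (ENNReal.ofReal (B k)) ^ N = E (Real.log (B k) * (N : ℝ)) := by
        intro k N h1 h2
        rw [E_def, mul_comm (Real.log (B k)) (N : ℝ), Real.exp_nat_mul,
          Real.exp_log (hBpos k h1 h2),
          ENNReal.ofReal_pow (hBpos k h1 h2).le]
      have hHint : ∫⁻ ω, H ω ∂μ
          = Aε * ∏ m ∈ Finset.Icc 1 (m0 - 1), E (Real.log (B (m0 - m)) * (vv v m : ℝ)) := by
        simp only [hH]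
        rw [lintegral_prod_iIndep (φ := fun i ω => E (c m0 * (g i ω : ℝ))) hsale hiIndep S
          (fun i => (measurable_from_nat (f := fun j : ℕ => E (c m0 * (j : ℝ)))).comp (hgsa i)),
          hS, Finset.prod_insert hinl]
        congr 1
        · show ∫⁻ ω, E (c m0 * (ε m0 ω : ℝ)) ∂μ = Aε
          rw [hAe,
            ← lintegral_map (measurable_from_nat (f := fun j : ℕ => E (c m0 * (j : ℝ))))
              (hmeasε m0), hεdist m0,
            lintegral_map (measurable_from_nat (f := fun j : ℕ => E (c m0 * (j : ℝ)))) hmeasε0]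
        · rw [Finset.prod_biUnion hdisjS]
          have hstep1 : ∀ k ∈ Finset.Icc 1 (m0 - 1),
              (∏ i ∈ (Finset.Icc 1 (vv v (m0 - k))).image
                  (fun l => (Sum.inr (m0, k, l) : ℕ ⊕ ℕ × ℕ × ℕ)),
                ∫⁻ ω, E (c m0 * (g i ω : ℝ)) ∂μ)
              = E (Real.log (B k) * (vv v (m0 - k) : ℝ)) := by
            intro k hk
            have hk' := Finset.mem_Icc.mp hk
            rw [Finset.prod_image (hinj k)]
            have hone : ∀ l, ∫⁻ ω, E (c m0 * (ξ m0 k l ω : ℝ)) ∂μ = ENNReal.ofReal (B k) := by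
              intro l
              rw [← lintegral_map (measurable_from_nat (f := fun j : ℕ => E (c m0 * (j : ℝ))))
                  (hmeasξ m0 k l), hξdist m0 k l,
                lintegral_map (measurable_from_nat (f := fun j : ℕ => E (c m0 * (j : ℝ))))
                  (hmeasξ0 k)]
              exact hBlint k hk'.1 hk'.2
            calc (∏ l ∈ Finset.Icc 1 (vv v (m0 - k)), ∫⁻ ω, E (c m0 * (ξ m0 k l ω : ℝ)) ∂μ)
                = ∏ l ∈ Finset.Icc 1 (vv v (m0 - k)), ENNReal.ofReal (B k) :=
                  Finset.prod_congr rfl fun l _ => hone l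
              _ = (ENNReal.ofReal (B k)) ^ (vv v (m0 - k)) := by
                  rw [Finset.prod_const, Nat.card_Icc]; norm_num
              _ = E (Real.log (B k) * (vv v (m0 - k) : ℝ)) := hpow k _ hk'.1 hk'.2
          rw [Finset.prod_congr rfl hstep1]
          refine Finset.prod_nbij' (fun k => m0 - k) (fun m => m0 - m) ?_ ?_ ?_ ?_ ?_
          · intro k hk; have := Finset.mem_Icc.mp hk; simp only [Finset.mem_Icc]; omega
          · intro m hm; have := Finset.mem_Icc.mp hm; simp only [Finset.mem_Icc]; omega
          · intro k hk; have := Finset.mem_Icc.mp hk; show m0 - (m0 - k) = k; omega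
          · intro m hm; have := Finset.mem_Icc.mp hm; show m0 - (m0 - m) = m; omega
          · intro k hk
            have hk' := Finset.mem_Icc.mp hk
            rw [Nat.sub_sub_self (by omega : k ≤ m0)]
      -- right-hand side term
      have hRHS : ∫⁻ ω in A v, ∏ m ∈ Finset.Icc 1 (m0 - 1),
            E ((c m + Real.log (B (m0 - m))) * (X m ω : ℝ)) ∂μ
          = (∏ m ∈ Finset.Icc 1 (m0 - 1),
              E ((c m + Real.log (B (m0 - m))) * (vv v m : ℝ))) * μ (A v) := by
        have : ∫⁻ ω in A v, ∏ m ∈ Finset.Icc 1 (m0 - 1),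
              E ((c m + Real.log (B (m0 - m))) * (X m ω : ℝ)) ∂μ
            = ∫⁻ _ω in A v, (∏ m ∈ Finset.Icc 1 (m0 - 1),
              E ((c m + Real.log (B (m0 - m))) * (vv v m : ℝ))) ∂μ := by
          refine setLIntegral_congr_fun (hAmeas v) (fun ω hω => ?_)
          refine Finset.prod_congr rfl fun m hm => ?_
          have hm' := Finset.mem_Icc.mp hm
          rw [(hmemA v ω).mp hω m hm'.1 hm'.2]
        rw [this, setLIntegral_const]
      have hKmul : ∏ m ∈ Finset.Icc 1 (m0 - 1), E ((c m + Real.log (B (m0 - m))) * (vv v m : ℝ))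
          = K * ∏ m ∈ Finset.Icc 1 (m0 - 1), E (Real.log (B (m0 - m)) * (vv v m : ℝ)) := by
        rw [hK, ← Finset.prod_mul_distrib]
        exact Finset.prod_congr rfl fun m _ => by rw [← E_add, ← add_mul]
      rw [hLHS1, hLHS2, hindH, hHint, hRHS, hKmul]
      ring
    rw [hdecomp fun ω => ∏ m ∈ Finset.Icc 1 m0, E (c m * (X m ω : ℝ)),
      hdecomp fun ω => ∏ m ∈ Finset.Icc 1 (m0 - 1),
        E ((c m + Real.log (B (m0 - m))) * (X m ω : ℝ))]
    rw [ENNReal.tsum_mul_left.symm]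
    exact tsum_congr hterm
  -- partially-updated exponents
  set F : ℕ → ℕ → ℝ := fun r d => θ + ∑ j ∈ Finset.Icc 1 (min r (d - 1)),
    Real.log (∫ ω, Real.exp (f j * (ξ0 (d - j) ω : ℝ)) ∂μ) with hFdef
  have hFf : ∀ r, F r (r + 1) = f (r + 1) := by
    intro r
    rcases Nat.eq_zero_or_pos r with h | h
    · subst h; simp [hFdef, hf1]
    · rw [hfk (r + 1) (by omega)]
      simp only [hFdef, Nat.add_sub_cancel, min_self]
  set L : ℕ → ℝ≥0∞ := fun r => ∫⁻ ω, ∏ m ∈ Finset.Icc 1 (n - r),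
    E (F r (n + 1 - m) * (X m ω : ℝ)) ∂μ with hLdef
  have hLstep : ∀ r, r < n → L r = (∫⁻ ω, E (f (r + 1) * (ε0 ω : ℝ)) ∂μ) * L (r + 1) := by
    intro r hr
    rcases eq_or_lt_of_le (Nat.succ_le_of_lt hr) with h | h
    · -- base: n = r + 1
      have h1 : n - r = 1 := by omega
      have h2 : n - (r + 1) = 0 := by omega
      have h3 : F r (n + 1 - 1) = f (r + 1) := by
        rw [show n + 1 - 1 = n by omega, ← h, hFf r]
      simp only [hLdef, h1, h2]
      rw [show Finset.Icc 1 1 = ({1} : Finset ℕ) from rfl]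
      simp only [Finset.prod_singleton, Finset.Icc_eq_empty_of_lt (by omega : (1:ℕ) > 0),
        Finset.prod_empty, lintegral_one, measure_univ, mul_one]
      rw [hX1, h3]
      rw [← lintegral_map (measurable_from_nat (f := fun j : ℕ => E (f (r + 1) * (j : ℝ))))
          (hmeasε 1), hεdist 1,
        lintegral_map (measurable_from_nat (f := fun j : ℕ => E (f (r + 1) * (j : ℝ)))) hmeasε0]
    · -- inductive step: m0 = n - r ≥ 2
      have hm0 : 2 ≤ n - r := by omega
      have hcm0 : F r (n + 1 - (n - r)) = f (r + 1) := by
        rw [show n + 1 - (n - r) = r + 1 by omega, hFf r]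
      have hc' : ∀ k, 1 ≤ k → k ≤ n - r - 1 →
          Integrable (fun ω => Real.exp (F r (n + 1 - (n - r)) * (ξ0 k ω : ℝ))) μ := by
        intro k _ _
        rw [hcm0]
        exact hintξ k (r + 1)
      have hexp : ∀ m, 1 ≤ m → m ≤ n - r - 1 →
          F r (n + 1 - m) + Real.log (∫ ω, Real.exp (f (r + 1) * (ξ0 (n - r - m) ω : ℝ)) ∂μ)
            = F (r + 1) (n + 1 - m) := by
        intro m h1 h2
        have hd1 : min r (n + 1 - m - 1) = r := by omega
        have hd2 : min (r + 1) (n + 1 - m - 1) = r + 1 := by omega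
        simp only [hFdef, hd1, hd2]
        rw [show Finset.Icc 1 (r + 1) = insert (r + 1) (Finset.Icc 1 r) from by
            ext x; simp only [Finset.mem_Icc, Finset.mem_insert]; omega,
          Finset.sum_insert (by simp)]
        rw [show n + 1 - m - (r + 1) = n - r - m by omega]
        ring
      have hstep := step (n - r) hm0 (fun m => F r (n + 1 - m)) hc'
      simp only [hLdef]
      rw [hstep]
      beta_reduce
      rw [hcm0]
      congr 1
      rw [show n - (r + 1) = n - r - 1 by omega]
      refine lintegral_congr fun ω => Finset.prod_congr rfl fun m hm => ?_
      have hm' := Finset.mem_Icc.mp hm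
      rw [hexp m hm'.1 hm'.2]
  have hLn : L n = 1 := by
    simp only [hLdef, Nat.sub_self]
    simp [Finset.Icc_eq_empty_of_lt (by omega : (1:ℕ) > 0)]
  have hL0 : ∀ r, r ≤ n → L 0 = (∏ j ∈ Finset.Icc 1 r,
      ∫⁻ ω, E (f j * (ε0 ω : ℝ)) ∂μ) * L r := by
    intro r
    induction r with
    | zero => intro _; simp
    | succ r ih =>
      intro hr
      rw [ih (by omega), hLstep r (by omega),
        show Finset.Icc 1 (r + 1) = insert (r + 1) (Finset.Icc 1 r) from by
          ext x; simp only [Finset.mem_Icc, Finset.mem_insert]; omega,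
        Finset.prod_insert (by simp)]
      ring
  have hL0n : L 0 = ∏ j ∈ Finset.Icc 1 n, ∫⁻ ω, E (f j * (ε0 ω : ℝ)) ∂μ := by
    rw [hL0 n le_rfl, hLn, mul_one]
  have hofLHS : ENNReal.ofReal (∫ ω, Real.exp (θ * ∑ k ∈ Finset.Icc 1 n, (X k ω : ℝ)) ∂μ)
      = L 0 := by
    rw [ofReal_integral_eq_lintegral_ofReal (hintX n hn)
      (Filter.Eventually.of_forall fun ω => (Real.exp_pos _).le)]
    simp only [hLdef, Nat.sub_zero]
    refine lintegral_congr fun ω => ?_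
    rw [← E_def, Finset.mul_sum, E_sum]
    refine Finset.prod_congr rfl fun m hm => ?_
    congr 1
    simp [hFdef]
  have hprod : ENNReal.ofReal (∏ k ∈ Finset.Icc 1 n, ∫ ω, Real.exp (f k * (ε0 ω : ℝ)) ∂μ)
      = L 0 := by
    rw [ENNReal.ofReal_prod_of_nonneg
      (fun i _ => integral_nonneg fun ω => (Real.exp_pos _).le), hL0n]
    refine Finset.prod_congr rfl fun k _ => ?_
    rw [ofReal_integral_eq_lintegral_ofReal (hintε k)
      (Filter.Eventually.of_forall fun ω => (Real.exp_pos _).le)]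
    rfl
  have hmain := hofLHS.trans hprod.symm
  have hLHSnn : 0 ≤ ∫ ω, Real.exp (θ * ∑ k ∈ Finset.Icc 1 n, (X k ω : ℝ)) ∂μ :=
    integral_nonneg fun ω => (Real.exp_pos _).le
  have hRHSnn : 0 ≤ ∏ k ∈ Finset.Icc 1 n, ∫ ω, Real.exp (f k * (ε0 ω : ℝ)) ∂μ :=
    Finset.prod_nonneg fun k _ => integral_nonneg fun ω => (Real.exp_pos _).le
  exact (ENNReal.ofReal_eq_ofReal_iff hLHSnn hRHSnn).mp hmain
end

section
/- Let ε and ξ_k (k ≥ 1) be Poisson with means α₀ and α_k respectively, ‖α‖₁ := Σ_{k≥1} α_k < 1. For θ ≤ θ_c := ‖α‖₁ - log‖α‖₁ - 1, the equation f = θ + ‖α‖₁(e^f - 1) has a smallest solution f_∞(θ) with f_∞(θ) ≤ -log‖α‖₁, f_∞(0) = 0, and f_∞ is increasing on (-∞, θ_c]. Moreover f_∞'(θ) = 1/(1 - ‖α‖₁ e^{f_∞(θ)}) → ∞ as θ ↑ θ_c. -/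
open MeasureTheory ProbabilityTheory Filter Topology NNReal

noncomputable def hawkesG (A f : ℝ) : ℝ := f - A * (Real.exp f - 1)

lemma hawkesG_hasDerivAt (A f : ℝ) : HasDerivAt (hawkesG A) (1 - A * Real.exp f) f := by
  have h1 : HasDerivAt (fun x : ℝ => x) 1 f := hasDerivAt_id f
  have h2 : HasDerivAt (fun x : ℝ => A * (Real.exp x - 1)) (A * Real.exp f) f := by
    simpa using ((Real.hasDerivAt_exp f).sub_const 1).const_mul A
  exact h1.sub h2

lemma hawkesG_cont (A : ℝ) : Continuous (hawkesG A) := by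
  unfold hawkesG; continuity

lemma hawkesG_strictMonoOn {A : ℝ} (hA : 0 < A) :
    StrictMonoOn (hawkesG A) (Set.Iic (-Real.log A)) := by
  apply strictMonoOn_of_deriv_pos (convex_Iic _) (hawkesG_cont A).continuousOn
  intro x hx
  rw [interior_Iic, Set.mem_Iio] at hx
  rw [(hawkesG_hasDerivAt A x).deriv]
  have hx' : Real.exp x < A⁻¹ := by
    have h1 : x < Real.log A⁻¹ := by rwa [Real.log_inv]
    calc Real.exp x < Real.exp (Real.log A⁻¹) := Real.exp_lt_exp.2 h1
      _ = A⁻¹ := Real.exp_log (by positivity)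
  have := mul_lt_mul_of_pos_left hx' hA
  rw [mul_inv_cancel₀ hA.ne'] at this
  linarith

lemma hawkesG_top {A : ℝ} (hA : 0 < A) :
    hawkesG A (-Real.log A) = A - Real.log A - 1 := by
  unfold hawkesG
  rw [Real.exp_neg, Real.exp_log hA, mul_sub, mul_inv_cancel₀ hA.ne', mul_one]
  ring

lemma hawkesG_exists_root {A : ℝ} (h0 : 0 < A) (h1 : A < 1) {θ : ℝ}
    (hθ : θ ≤ A - Real.log A - 1) :
    ∃ f, f ≤ -Real.log A ∧ hawkesG A f = θ := by
  set L := -Real.log A with hL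
  have hL0 : 0 ≤ L := by
    have := Real.log_nonpos h0.le h1.le
    simp only [hL]; linarith
  set m := min (θ - A) 0 with hm
  have hmL : m ≤ L := le_trans (min_le_right _ _) hL0
  have hgm : hawkesG A m ≤ θ := by
    have hpos : 0 < A * Real.exp m := by positivity
    have hm' : m ≤ θ - A := min_le_left _ _
    unfold hawkesG; nlinarith
  have hgL : θ ≤ hawkesG A L := by rw [hL, hawkesG_top h0]; exact hθ
  obtain ⟨f, hf, hgf⟩ := intermediate_value_Icc hmL (hawkesG_cont A).continuousOn ⟨hgm, hgL⟩
  exact ⟨f, hf.2, hgf⟩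

/-- Characterization of the limiting exponent `f_∞` for the discrete-time linear Hawkes
process: for `θ ≤ θ_c = ‖α‖₁ - log‖α‖₁ - 1` the equation `f = θ + ‖α‖₁(e^f - 1)` has a
smallest solution `f_∞(θ)` with `f_∞(θ) ≤ -log‖α‖₁`, `f_∞(0) = 0`, `f_∞` increasing on
`(-∞, θ_c]`, `f_∞'(θ) = 1/(1 - ‖α‖₁ e^{f_∞(θ)})`, and `f_∞'(θ) → ∞` as `θ ↑ θ_c`. -/
theorem hawkes_finf_properties {Ω : Type*} [MeasurableSpace Ω] (μ : Measure Ω)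
    [IsProbabilityMeasure μ]
    (α0 : ℝ≥0) (hα0 : 0 < α0) (α : ℕ → ℝ≥0)
    (ε : Ω → ℕ) (hmeasε : Measurable ε) (hε : μ.map ε = poissonMeasure α0)
    (ξ : ℕ → Ω → ℕ) (hmeasξ : ∀ k, Measurable (ξ k))
    (hξ : ∀ k : ℕ, 1 ≤ k → μ.map (ξ k) = poissonMeasure (α k))
    (A : ℝ) (hA : A = ∑' k : ℕ, (α (k + 1) : ℝ))
    (hsum : Summable (fun k : ℕ => (α (k + 1) : ℝ)))
    (hApos : 0 < A) (hAlt : A < 1)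
    (θc : ℝ) (hθc : θc = A - Real.log A - 1) :
    ∃ finf : ℝ → ℝ,
      (∀ θ ≤ θc, finf θ = θ + A * (Real.exp (finf θ) - 1) ∧
        ∀ y : ℝ, y = θ + A * (Real.exp y - 1) → finf θ ≤ y) ∧
      (∀ θ ≤ θc, finf θ ≤ -Real.log A) ∧
      finf 0 = 0 ∧
      StrictMonoOn finf (Set.Iic θc) ∧
      (∀ θ < θc, HasDerivAt finf (1 / (1 - A * Real.exp (finf θ))) θ) ∧
      Tendsto (fun θ => 1 / (1 - A * Real.exp (finf θ))) (𝓝[<] θc) atTop := by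
  classical
  set L : ℝ := -Real.log A with hL
  have hL0 : 0 < L := by
    have := Real.log_neg hApos hAlt
    simp only [hL]; linarith
  have hexpL : Real.exp L = A⁻¹ := by rw [hL, Real.exp_neg, Real.exp_log hApos]
  have hmono : StrictMonoOn (hawkesG A) (Set.Iic L) := hawkesG_strictMonoOn hApos
  have hgtop : hawkesG A L = θc := by rw [hθc, hL]; exact hawkesG_top hApos
  have key : ∀ θ, θ ≤ θc → ∃ f, f ≤ L ∧ hawkesG A f = θ := fun θ h =>
    hawkesG_exists_root hApos hAlt (by rw [← hθc]; exact h)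
  set finf : ℝ → ℝ := fun θ => if h : θ ≤ θc then (key θ h).choose else 0 with hfinf
  have hspec : ∀ θ, θ ≤ θc → finf θ ≤ L ∧ hawkesG A (finf θ) = θ := by
    intro θ h
    simp only [hfinf, dif_pos h]
    exact (key θ h).choose_spec
  have hinv : ∀ f, f ≤ L → finf (hawkesG A f) = f := by
    intro f hf
    have hfc : hawkesG A f ≤ θc := by
      rw [← hgtop]
      exact hmono.monotoneOn (Set.mem_Iic.2 hf) (Set.mem_Iic.2 le_rfl) hf
    exact hmono.injOn (Set.mem_Iic.2 (hspec _ hfc).1) (Set.mem_Iic.2 hf) (hspec _ hfc).2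
  have hLlt : ∀ θ, θ < θc → finf θ < L := by
    intro θ h
    rcases lt_or_eq_of_le (hspec θ h.le).1 with h' | h'
    · exact h'
    · exfalso
      have := (hspec θ h.le).2
      rw [h', hgtop] at this
      linarith
  have hpos : ∀ θ, θ < θc → 0 < 1 - A * Real.exp (finf θ) := by
    intro θ h
    have hexp : Real.exp (finf θ) < A⁻¹ := hexpL ▸ Real.exp_lt_exp.2 (hLlt θ h)
    have := mul_lt_mul_of_pos_left hexp hApos
    rw [mul_inv_cancel₀ hApos.ne'] at this
    linarith
  have hmono_finf : StrictMonoOn finf (Set.Iic θc) := by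
    intro a ha b hb hab
    by_contra hcon
    push_neg at hcon
    have := hmono.monotoneOn (Set.mem_Iic.2 (hspec b hb).1) (Set.mem_Iic.2 (hspec a ha).1) hcon
    rw [(hspec a ha).2, (hspec b hb).2] at this
    linarith
  have hcont : ∀ θ, θ < θc → ContinuousAt finf θ := by
    intro θ hθ
    rw [Metric.continuousAt_iff]
    intro εp hεp
    have hf0 : finf θ < L := hLlt θ hθ
    set f0 := finf θ with hf0def
    set δ' : ℝ := min (εp / 2) ((L - f0) / 2) with hδ'
    have hδ'0 : 0 < δ' := lt_min (by linarith) (by linarith)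
    have hδ'ε : δ' < εp := lt_of_le_of_lt (min_le_left _ _) (by linarith)
    have hub : f0 + δ' ≤ L := by
      have h2 : δ' ≤ (L - f0) / 2 := min_le_right _ _
      linarith
    have hmemθ : f0 ∈ Set.Iic L := Set.mem_Iic.2 hf0.le
    have hmem1 : f0 - δ' ∈ Set.Iic L := Set.mem_Iic.2 (by linarith)
    have hmem2 : f0 + δ' ∈ Set.Iic L := Set.mem_Iic.2 hub
    have haθ : hawkesG A (f0 - δ') < θ := by
      have := hmono hmem1 hmemθ (by linarith)
      rwa [(hspec θ hθ.le).2] at this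
    have hθb : θ < hawkesG A (f0 + δ') := by
      have := hmono hmemθ hmem2 (by linarith)
      rwa [(hspec θ hθ.le).2] at this
    have hbθc : hawkesG A (f0 + δ') ≤ θc := by
      rw [← hgtop]
      exact hmono.monotoneOn hmem2 (Set.mem_Iic.2 le_rfl) hub
    refine ⟨min (θ - hawkesG A (f0 - δ')) (hawkesG A (f0 + δ') - θ),
      lt_min (by linarith) (by linarith), ?_⟩
    intro x hx
    rw [Real.dist_eq] at hx
    have h1 : hawkesG A (f0 - δ') < x := by
      have := abs_lt.1 (lt_of_lt_of_le hx (min_le_left _ _))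
      linarith [this.1]
    have h2 : x < hawkesG A (f0 + δ') := by
      have := abs_lt.1 (lt_of_lt_of_le hx (min_le_right _ _))
      linarith [this.2]
    have hxθc : x ≤ θc := le_trans h2.le hbθc
    have hlow : f0 - δ' ≤ finf x := by
      have := hmono_finf.monotoneOn (Set.mem_Iic.2 (le_trans h1.le hxθc))
        (Set.mem_Iic.2 hxθc) h1.le
      rwa [hinv _ hmem1] at this
    have hhigh : finf x ≤ f0 + δ' := by
      have := hmono_finf.monotoneOn (Set.mem_Iic.2 hxθc) (Set.mem_Iic.2 hbθc) h2.le
      rwa [hinv _ hmem2] at this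
    rw [Real.dist_eq, abs_lt]
    constructor <;> linarith
  have hderiv : ∀ θ, θ < θc → HasDerivAt finf (1 / (1 - A * Real.exp (finf θ))) θ := by
    intro θ hθ
    rw [one_div]
    exact HasDerivAt.of_local_left_inverse (hcont θ hθ) (hawkesG_hasDerivAt A (finf θ))
      (hpos θ hθ).ne' (by filter_upwards [Iio_mem_nhds hθ] with y hy; exact (hspec y hy.le).2)
  have htend : Tendsto finf (𝓝[<] θc) (𝓝 L) := by
    rw [tendsto_order]
    constructor
    · intro c hc
      have hf1L : (c + L) / 2 < L := by linarith
      have ha : hawkesG A ((c + L) / 2) < θc := by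
        rw [← hgtop]
        exact hmono (Set.mem_Iic.2 hf1L.le) (Set.mem_Iic.2 le_rfl) hf1L
      filter_upwards [Ioo_mem_nhdsLT ha] with x hx
      have := hmono_finf.monotoneOn (Set.mem_Iic.2 (le_trans hx.1.le hx.2.le))
        (Set.mem_Iic.2 hx.2.le) hx.1.le
      rw [hinv _ hf1L.le] at this
      linarith
    · intro c hc
      filter_upwards [self_mem_nhdsWithin] with x hx
      exact lt_of_le_of_lt (hspec x (Set.mem_Iio.1 hx).le).1 hc
  have hfin : Tendsto (fun θ => 1 - A * Real.exp (finf θ)) (𝓝[<] θc) (𝓝[>] 0) := by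
    rw [tendsto_nhdsWithin_iff]
    constructor
    · have h1 : Tendsto (fun θ => 1 - A * Real.exp (finf θ)) (𝓝[<] θc)
          (𝓝 (1 - A * Real.exp L)) :=
        tendsto_const_nhds.sub (((Real.continuous_exp.tendsto L).comp htend).const_mul A)
      have : 1 - A * Real.exp L = 0 := by
        rw [hexpL, mul_inv_cancel₀ hApos.ne']; ring
      rwa [this] at h1
    · filter_upwards [self_mem_nhdsWithin] with x hx
      exact Set.mem_Ioi.2 (hpos x (Set.mem_Iio.1 hx))
  refine ⟨finf, ?_, ?_, ?_, hmono_finf, hderiv, ?_⟩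
  · intro θ hθ
    constructor
    · have := (hspec θ hθ).2
      simp only [hawkesG] at this
      linarith
    · intro y hy
      have hgy : hawkesG A y = θ := by simp only [hawkesG]; linarith
      rcases le_or_gt y L with h | h
      · rw [← hgy, hinv y h]
      · exact le_trans (hspec θ hθ).1 h.le
  · intro θ hθ
    exact (hspec θ hθ).1
  · have hg0 : hawkesG A 0 = 0 := by simp [hawkesG]
    calc finf 0 = finf (hawkesG A 0) := by rw [hg0]
      _ = 0 := hinv 0 hL0.le
  · have := tendsto_inv_nhdsGT_zero.comp hfin
    simpa [one_div, Function.comp_def] using this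
end
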